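/- Let p ≥ 1 and let n_1,...,n_p be integers with n_j ≥ 1 and s = n_1+...+n_p ≥ p. Then the sum over r from 1 to p of (r-1)! times the sum over ordered partitions J_1 ⊎ ... ⊎ J_r of {1,...,p} (ordered by minima) of (s-p)! times the product over i=1..r of [ (N_i - 2)! (N_i - |J_i|) / (N_i - |J_i|)! ], where N_i = sum of n_k over k ∈ J_i, equals (s-1)!. Here any term containing a factorial of a negative integer is interpreted as zero. -/

import Mathlib

set_option linter.unusedSectionVars false
set_option linter.unusedVariables false
set_option maxHeartbeats 1000000


open MvPolynomial Finset

/-- `P` is a set partition of the finset `S`: its parts are nonempty, pairwise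
disjoint, and their union is `S`. -/
abbrev IsSetPartition {α : Type*} [DecidableEq α] (S : Finset α)
    (P : Finset (Finset α)) : Prop :=
  (∀ B ∈ P, B.Nonempty) ∧ (∀ B ∈ P, ∀ B' ∈ P, B ≠ B' → Disjoint B B') ∧
    P.sup id = S

/-- The finset of all set partitions of a finset `S` in a finite type. -/
def partitionsOf {α : Type*} [Fintype α] [DecidableEq α] (S : Finset α) :
    Finset (Finset (Finset α)) :=
  Finset.univ.filter (IsSetPartition S)


namespace CoefCEval

variable {α : Type*} [Fintype α] [DecidableEq α]

def W (n : α → ℕ) (B : Finset α) : ℕ :=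
  ((∑ k ∈ B, n k) - B.card).ascFactorial (B.card - 1)

def T (n : α → ℕ) (S : Finset α) : ℕ :=
  ∑ P ∈ partitionsOf S, (P.card - 1).factorial * ∏ B ∈ P, W n B

lemma mem_partitionsOf {S : Finset α} {P : Finset (Finset α)} :
    P ∈ partitionsOf S ↔ IsSetPartition S P := by
  simp [partitionsOf]

lemma block_subset {S : Finset α} {P : Finset (Finset α)} (hP : IsSetPartition S P)
    {B : Finset α} (hB : B ∈ P) : B ⊆ S := by
  rw [← hP.2.2]; exact Finset.le_sup (f := id) hB

lemma exists_block {S : Finset α} {P : Finset (Finset α)} (hP : IsSetPartition S P)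
    {x : α} (hx : x ∈ S) : ∃ B ∈ P, x ∈ B := by
  rw [← hP.2.2] at hx
  simpa using Finset.mem_sup.mp hx

lemma block_unique {S : Finset α} {P : Finset (Finset α)} (hP : IsSetPartition S P)
    {B B' : Finset α} (hB : B ∈ P) (hB' : B' ∈ P) {x : α} (hx : x ∈ B) (hx' : x ∈ B') :
    B = B' := by
  by_contra h
  exact absurd hx' (Finset.disjoint_left.mp (hP.2.1 B hB B' hB' h) hx)

def blk (P : Finset (Finset α)) (x : α) : Finset α :=
  P.sup fun B => if x ∈ B then B else ∅

lemma blk_eq {S : Finset α} {P : Finset (Finset α)} (hP : IsSetPartition S P)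
    {B : Finset α} {x : α} (hB : B ∈ P) (hx : x ∈ B) : blk P x = B := by
  apply le_antisymm
  · apply Finset.sup_le
    intro C hC
    by_cases h : x ∈ C
    · rw [if_pos h]
      exact le_of_eq (block_unique hP hC hB h hx)
    · rw [if_neg h]; exact bot_le
  · have := Finset.le_sup (s := P) (f := fun B => if x ∈ B then B else ∅) hB
    simp only [if_pos hx] at this
    exact this

lemma blk_mem {S : Finset α} {P : Finset (Finset α)} (hP : IsSetPartition S P)
    {x : α} (hx : x ∈ S) : blk P x ∈ P ∧ x ∈ blk P x := by
  obtain ⟨B, hB, hxB⟩ := exists_block hP hx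
  rw [blk_eq hP hB hxB]; exact ⟨hB, hxB⟩

lemma asc_step (m k : ℕ) :
    (m + 1).ascFactorial k = m.ascFactorial k + k * (m + 1).ascFactorial (k - 1) := by
  cases k with
  | zero => simp
  | succ t =>
    have h := Nat.succ_ascFactorial m t
    simp only [Nat.succ_eq_add_one] at h ⊢
    simp only [Nat.add_sub_cancel]
    rw [Nat.ascFactorial_succ, Nat.ascFactorial_succ, ← h]
    ring

lemma W_update_of_not_mem {n : α → ℕ} {a : α} {v : ℕ} {B : Finset α} (ha : a ∉ B) :
    W (Function.update n a v) B = W n B := by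
  unfold W
  congr 2
  apply Finset.sum_congr rfl
  intro k hk
  exact Function.update_of_ne (by rintro rfl; exact ha hk) _ _

lemma isPartition_erase {S : Finset α} {P : Finset (Finset α)} (hP : IsSetPartition S P)
    {B : Finset α} (hB : B ∈ P) {a j : α} (haB : a ∈ B) (hjB : j ∈ B) (hja : j ≠ a) :
    IsSetPartition (S.erase a) (insert (B.erase a) (P.erase B)) ∧
      B.erase a ∉ P.erase B ∧
      (insert (B.erase a) (P.erase B)).card = P.card := by
  have hBne : ∀ C ∈ P.erase B, a ∉ C := by
    intro C hC haC
    have hCB : C ≠ B := (Finset.mem_erase.mp hC).1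
    have := hP.2.1 C (Finset.mem_of_mem_erase hC) B hB hCB
    exact absurd haB (Finset.disjoint_left.mp this haC)
  have hnotmem : B.erase a ∉ P.erase B := by
    intro hmem
    have hCB : B.erase a ≠ B := (Finset.mem_erase.mp hmem).1
    have := hP.2.1 _ (Finset.mem_of_mem_erase hmem) B hB hCB
    exact absurd hjB (Finset.disjoint_left.mp this (Finset.mem_erase.mpr ⟨hja, hjB⟩))
  refine ⟨⟨?_, ?_, ?_⟩, hnotmem, ?_⟩
  · intro C hC
    rcases Finset.mem_insert.mp hC with rfl | hC
    · exact ⟨j, Finset.mem_erase.mpr ⟨hja, hjB⟩⟩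
    · exact hP.1 C (Finset.mem_of_mem_erase hC)
  · intro C hC C' hC' hne
    rcases Finset.mem_insert.mp hC with rfl | hC <;>
      rcases Finset.mem_insert.mp hC' with rfl | hC'
    · exact absurd rfl hne
    · exact Finset.disjoint_of_subset_left (Finset.erase_subset a B)
        (hP.2.1 B hB C' (Finset.mem_of_mem_erase hC') (Ne.symm (Finset.mem_erase.mp hC').1))
    · exact (Finset.disjoint_of_subset_left (Finset.erase_subset a B)
        (hP.2.1 B hB C (Finset.mem_of_mem_erase hC) (Ne.symm (Finset.mem_erase.mp hC).1))).symm
    · exact hP.2.1 C (Finset.mem_of_mem_erase hC) C' (Finset.mem_of_mem_erase hC') hne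
  · have hX : a ∉ (P.erase B).sup id := by
      intro ha
      obtain ⟨C, hC, haC⟩ := Finset.mem_sup.mp ha
      exact hBne C hC haC
    have hS : B ⊔ (P.erase B).sup id = S := by
      rw [← hP.2.2]
      conv_rhs => rw [← Finset.insert_erase hB]
      rw [Finset.sup_insert]
      rfl
    rw [Finset.sup_insert]
    rw [← hS]
    show B.erase a ∪ (P.erase B).sup id = (B ∪ (P.erase B).sup id).erase a
    rw [Finset.erase_union_distrib, Finset.erase_eq_of_notMem hX]
  · rw [Finset.card_insert_of_notMem hnotmem, Finset.card_erase_of_mem hB]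
    have : 1 ≤ P.card := Finset.card_pos.mpr ⟨B, hB⟩
    omega

lemma isPartition_insert {S : Finset α} {a : α} {P' : Finset (Finset α)}
    (hP' : IsSetPartition (S.erase a) P') (haS : a ∈ S)
    {B' : Finset α} (hB' : B' ∈ P') :
    IsSetPartition S (insert (insert a B') (P'.erase B')) ∧
      insert a B' ∉ P'.erase B' ∧
      (insert (insert a B') (P'.erase B')).card = P'.card := by
  have hnota : ∀ C ∈ P', a ∉ C := by
    intro C hC haC
    have : C ⊆ S.erase a := by
      rw [← hP'.2.2]; exact Finset.le_sup (f := id) hC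
    exact absurd (this haC) (Finset.notMem_erase a S)
  have hnotmem : insert a B' ∉ P'.erase B' := by
    intro hmem
    exact hnota _ (Finset.mem_of_mem_erase hmem) (Finset.mem_insert_self a B')
  refine ⟨⟨?_, ?_, ?_⟩, hnotmem, ?_⟩
  · intro C hC
    rcases Finset.mem_insert.mp hC with rfl | hC
    · exact ⟨a, Finset.mem_insert_self a B'⟩
    · exact hP'.1 C (Finset.mem_of_mem_erase hC)
  · intro C hC C' hC' hne
    rcases Finset.mem_insert.mp hC with rfl | hC <;>
      rcases Finset.mem_insert.mp hC' with rfl | hC'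
    · exact absurd rfl hne
    · rw [Finset.disjoint_insert_left]
      exact ⟨hnota C' (Finset.mem_of_mem_erase hC'),
        hP'.2.1 B' hB' C' (Finset.mem_of_mem_erase hC') (Ne.symm (Finset.mem_erase.mp hC').1)⟩
    · rw [Finset.disjoint_insert_right]
      exact ⟨hnota C (Finset.mem_of_mem_erase hC),
        (hP'.2.1 B' hB' C (Finset.mem_of_mem_erase hC) (Ne.symm (Finset.mem_erase.mp hC).1)).symm⟩
    · exact hP'.2.1 C (Finset.mem_of_mem_erase hC) C' (Finset.mem_of_mem_erase hC') hne
  · have hS : B' ⊔ (P'.erase B').sup id = S.erase a := by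
      rw [← hP'.2.2]
      conv_rhs => rw [← Finset.insert_erase hB']
      rw [Finset.sup_insert]
      rfl
    rw [Finset.sup_insert]
    show insert a B' ∪ (P'.erase B').sup id = S
    rw [Finset.insert_union]
    show insert a (B' ⊔ (P'.erase B').sup id) = S
    rw [hS, Finset.insert_erase haS]
  · rw [Finset.card_insert_of_notMem hnotmem, Finset.card_erase_of_mem hB']
    have : 1 ≤ P'.card := Finset.card_pos.mpr ⟨B', hB'⟩
    omega

lemma W_split {n : α → ℕ} {B : Finset α} {a : α} (haB : a ∈ B)
    (h1 : ∀ k ∈ B, 1 ≤ n k) (hna : 2 ≤ n a) :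
    W n B = W (Function.update n a (n a - 1)) B
      + (B.card - 1) * (((∑ k ∈ B, n k) - B.card).ascFactorial (B.card - 2)) := by
  have hN : ∑ k ∈ B, n k = n a + ∑ k ∈ B.erase a, n k := (Finset.add_sum_erase B n haB).symm
  have hgec : (B.erase a).card ≤ ∑ k ∈ B.erase a, n k := by
    calc (B.erase a).card = ∑ k ∈ B.erase a, 1 := by rw [Finset.sum_const, smul_eq_mul, mul_one]
    _ ≤ ∑ k ∈ B.erase a, n k :=
        Finset.sum_le_sum (fun k hk => h1 k (Finset.mem_of_mem_erase hk))
  have hbc : B.card = (B.erase a).card + 1 := by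
    rw [Finset.card_erase_of_mem haB]
    have : 1 ≤ B.card := Finset.card_pos.mpr ⟨a, haB⟩
    omega
  have hNb : B.card + 1 ≤ ∑ k ∈ B, n k := by omega
  have hupd : ∑ k ∈ B, Function.update n a (n a - 1) k = (∑ k ∈ B, n k) - 1 := by
    rw [Finset.sum_update_of_mem haB]
    rw [← Finset.erase_eq]
    omega
  rw [W, W, hupd]
  have e2 : (∑ k ∈ B, n k) - 1 - B.card = (∑ k ∈ B, n k) - B.card - 1 := by omega
  have e1 : (∑ k ∈ B, n k) - B.card = ((∑ k ∈ B, n k) - B.card - 1) + 1 := by omega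
  rw [e2]
  conv_lhs => rw [e1]
  conv_rhs => rw [e1]
  have e3 : B.card - 2 = (B.card - 1) - 1 := by omega
  rw [e3]
  exact asc_step _ _


lemma not_mem_of_ne_blk {S : Finset α} {P : Finset (Finset α)} (hP : IsSetPartition S P)
    {x : α} (hx : x ∈ S) {C : Finset α} (hC : C ∈ P) (hne : C ≠ blk P x) : x ∉ C := by
  intro hxC
  exact hne (blk_eq hP hC hxC).symm

/-- The merge step: for fixed `j ∈ S.erase a`, the sum over partitions of `S`
in which `a` and `j` share a block equals `T` of the merged data. -/
lemma merge_step {S : Finset α} {n : α → ℕ} {a : α} (haS : a ∈ S)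
    (hna : 2 ≤ n a) {j : α} (hj : j ∈ S.erase a) :
    ∑ P ∈ (partitionsOf S).filter (fun P => j ∈ blk P a),
        (P.card - 1).factorial *
          ((((∑ k ∈ blk P a, n k) - (blk P a).card).ascFactorial ((blk P a).card - 2)) *
            ∏ C ∈ P.erase (blk P a), W n C)
      = T (Function.update n j (n j + n a - 1)) (S.erase a) := by
  classical
  have hja : j ≠ a := (Finset.mem_erase.mp hj).1
  set m := Function.update n j (n j + n a - 1) with hm
  rw [T]
  refine Finset.sum_nbij'
    (i := fun P => insert ((blk P a).erase a) (P.erase (blk P a)))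
    (j := fun P' => insert (insert a (blk P' j)) (P'.erase (blk P' j)))
    ?_ ?_ ?_ ?_ ?_
  · -- maps to
    intro P hP
    obtain ⟨hPp, hcond⟩ := Finset.mem_filter.mp hP
    rw [mem_partitionsOf] at hPp
    obtain ⟨hBm, haB⟩ := blk_mem hPp haS
    rw [mem_partitionsOf]
    exact (isPartition_erase hPp hBm haB hcond hja).1
  · -- reverse maps to
    intro P' hP'
    rw [mem_partitionsOf] at hP'
    obtain ⟨hBm', hjB'⟩ := blk_mem hP' hj
    have h := isPartition_insert hP' haS hBm'
    rw [Finset.mem_filter, mem_partitionsOf]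
    refine ⟨h.1, ?_⟩
    have : blk (insert (insert a (blk P' j)) (P'.erase (blk P' j))) a = insert a (blk P' j) :=
      blk_eq h.1 (Finset.mem_insert_self _ _) (Finset.mem_insert_self a _)
    rw [this]
    exact Finset.mem_insert_of_mem hjB'
  · -- left inverse
    intro P hP
    obtain ⟨hPp, hcond⟩ := Finset.mem_filter.mp hP
    rw [mem_partitionsOf] at hPp
    obtain ⟨hBm, haB⟩ := blk_mem hPp haS
    have h := isPartition_erase hPp hBm haB hcond hja
    have hblkQ : blk (insert ((blk P a).erase a) (P.erase (blk P a))) j = (blk P a).erase a :=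
      blk_eq h.1 (Finset.mem_insert_self _ _) (Finset.mem_erase.mpr ⟨hja, hcond⟩)
    rw [hblkQ, Finset.erase_insert h.2.1, Finset.insert_erase haB, Finset.insert_erase hBm]
  · -- right inverse
    intro P' hP'
    rw [mem_partitionsOf] at hP'
    obtain ⟨hBm', hjB'⟩ := blk_mem hP' hj
    have h := isPartition_insert hP' haS hBm'
    have hblkQ : blk (insert (insert a (blk P' j)) (P'.erase (blk P' j))) a
        = insert a (blk P' j) :=
      blk_eq h.1 (Finset.mem_insert_self _ _) (Finset.mem_insert_self a _)
    have hanot : a ∉ blk P' j := by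
      intro haB'
      have : blk P' j ⊆ S.erase a := by
        rw [← hP'.2.2]; exact Finset.le_sup (f := id) hBm'
      exact absurd (this haB') (Finset.notMem_erase a S)
    rw [hblkQ, Finset.erase_insert h.2.1, Finset.erase_insert hanot, Finset.insert_erase hBm']
  · -- values agree
    intro P hP
    obtain ⟨hPp, hcond⟩ := Finset.mem_filter.mp hP
    rw [mem_partitionsOf] at hPp
    obtain ⟨hBm, haB⟩ := blk_mem hPp haS
    have h := isPartition_erase hPp hBm haB hcond hja
    -- cardinality
    rw [h.2.2]
    congr 1
    -- products
    rw [Finset.prod_insert h.2.1]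
    have hprod : ∏ C ∈ P.erase (blk P a), W m C = ∏ C ∈ P.erase (blk P a), W n C := by
      apply Finset.prod_congr rfl
      intro C hC
      have hjC : j ∉ C := by
        intro hjC
        exact (Finset.mem_erase.mp hC).1
          (block_unique hPp (Finset.mem_of_mem_erase hC) hBm hjC hcond)
      exact W_update_of_not_mem hjC
    rw [hprod]
    congr 1
    -- the merged block weight
    have hjB : j ∈ (blk P a).erase a := Finset.mem_erase.mpr ⟨hja, hcond⟩
    have hsum : ∑ k ∈ (blk P a).erase a, m k
        = (∑ k ∈ (blk P a).erase a, n k) + (n a - 1) := by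
      rw [hm, Finset.sum_update_of_mem hjB, ← Finset.erase_eq]
      have := Finset.add_sum_erase ((blk P a).erase a) n hjB
      omega
    have hsumB : ∑ k ∈ blk P a, n k = n a + ∑ k ∈ (blk P a).erase a, n k :=
      (Finset.add_sum_erase _ n haB).symm
    have hcardB : (blk P a).card = ((blk P a).erase a).card + 1 := by
      rw [Finset.card_erase_of_mem haB]
      have : 1 ≤ (blk P a).card := Finset.card_pos.mpr ⟨a, haB⟩
      omega
    rw [W, hsum]
    congr 1
    · omega
    · omega

lemma T_rec {S : Finset α} {n : α → ℕ} {a : α} (haS : a ∈ S)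
    (h1 : ∀ k ∈ S, 1 ≤ n k) (hna : 2 ≤ n a) :
    T n S = T (Function.update n a (n a - 1)) S
      + ∑ j ∈ S.erase a, T (Function.update n j (n j + n a - 1)) (S.erase a) := by
  classical
  set n' := Function.update n a (n a - 1) with hn'def
  set st : Finset α → ℕ :=
    fun B => ((∑ k ∈ B, n k) - B.card).ascFactorial (B.card - 2) with hst
  have step1 : ∀ P ∈ partitionsOf S,
      ∏ B ∈ P, W n B
        = ∏ B ∈ P, W n' B
          + ∑ B ∈ P, (if a ∈ B then (B.card - 1) * st B else 0) * ∏ C ∈ P.erase B, W n C := by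
    intro P hP
    rw [mem_partitionsOf] at hP
    obtain ⟨hB₀, haB₀⟩ := blk_mem hP haS
    have hprod_eq : ∏ C ∈ P.erase (blk P a), W n' C = ∏ C ∈ P.erase (blk P a), W n C := by
      apply Finset.prod_congr rfl
      intro C hC
      exact W_update_of_not_mem (not_mem_of_ne_blk hP haS (Finset.mem_of_mem_erase hC)
        (Finset.mem_erase.mp hC).1)
    have hsum : ∑ B ∈ P, (if a ∈ B then (B.card - 1) * st B else 0) * ∏ C ∈ P.erase B, W n C
        = ((blk P a).card - 1) * st (blk P a) * ∏ C ∈ P.erase (blk P a), W n C := by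
      rw [Finset.sum_eq_single (blk P a)]
      · rw [if_pos haB₀]
      · intro B hB hne
        rw [if_neg (not_mem_of_ne_blk hP haS hB hne), zero_mul]
      · intro h; exact absurd hB₀ h
    rw [hsum, ← Finset.mul_prod_erase P (W n) hB₀, ← Finset.mul_prod_erase P (W n') hB₀,
      hprod_eq, ← add_mul]
    congr 1
    exact W_split haB₀ (fun k hk => h1 k (block_subset hP hB₀ hk)) hna
  have step2 : ∀ P ∈ partitionsOf S, ∀ B ∈ P,
      (if a ∈ B then (B.card - 1) * st B else 0) * ∏ C ∈ P.erase B, W n C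
        = ∑ j ∈ S.erase a,
            (if a ∈ B ∧ j ∈ B then st B * ∏ C ∈ P.erase B, W n C else 0) := by
    intro P hP B hB
    rw [mem_partitionsOf] at hP
    by_cases haB : a ∈ B
    · rw [if_pos haB]
      have hcong : ∀ j, (if a ∈ B ∧ j ∈ B then st B * ∏ C ∈ P.erase B, W n C else 0)
          = (if j ∈ B then st B * ∏ C ∈ P.erase B, W n C else 0) := by
        intro j
        by_cases h : j ∈ B <;> simp [h, haB]
      rw [Finset.sum_congr rfl (fun j _ => hcong j), Finset.sum_ite_mem]
      have hIB : (S.erase a) ∩ B = B.erase a := by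
        ext k
        simp only [Finset.mem_inter, Finset.mem_erase]
        constructor
        · rintro ⟨⟨hka, _⟩, hkB⟩; exact ⟨hka, hkB⟩
        · rintro ⟨hka, hkB⟩; exact ⟨⟨hka, block_subset hP hB hkB⟩, hkB⟩
      rw [hIB, Finset.sum_const, Finset.card_erase_of_mem haB, smul_eq_mul, mul_assoc]
    · rw [if_neg haB, zero_mul]
      exact (Finset.sum_eq_zero (fun j hj => if_neg (fun h => haB h.1))).symm
  -- assemble
  rw [T, Finset.sum_congr rfl (fun P hP => by rw [step1 P hP])]
  simp only [mul_add]
  rw [Finset.sum_add_distrib]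
  congr 1
  rw [Finset.sum_congr rfl (fun P hP => by
    rw [Finset.sum_congr rfl (fun B hB => step2 P hP B hB), Finset.sum_comm,
      Finset.mul_sum])]
  rw [Finset.sum_comm]
  apply Finset.sum_congr rfl
  intro j hj
  rw [← merge_step haS hna hj]
  -- reduce inner sums to the filtered form
  have inner : ∀ P ∈ partitionsOf S,
      (P.card - 1).factorial * ∑ B ∈ P,
          (if a ∈ B ∧ j ∈ B then st B * ∏ C ∈ P.erase B, W n C else 0)
        = if j ∈ blk P a then
            (P.card - 1).factorial *
              (st (blk P a) * ∏ C ∈ P.erase (blk P a), W n C)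
          else 0 := by
    intro P hP
    rw [mem_partitionsOf] at hP
    obtain ⟨hBm, haB⟩ := blk_mem hP haS
    have : ∑ B ∈ P, (if a ∈ B ∧ j ∈ B then st B * ∏ C ∈ P.erase B, W n C else 0)
        = if j ∈ blk P a then st (blk P a) * ∏ C ∈ P.erase (blk P a), W n C else 0 := by
      rw [Finset.sum_eq_single (blk P a)]
      · by_cases h : j ∈ blk P a
        · rw [if_pos ⟨haB, h⟩, if_pos h]
        · rw [if_neg (fun hh => h hh.2), if_neg h]
      · intro B hB hne
        exact if_neg (fun hh => (not_mem_of_ne_blk hP haS hB hne) hh.1)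
      · intro h; exact absurd hBm h
    rw [this]
    by_cases h : j ∈ blk P a
    · rw [if_pos h, if_pos h]
    · rw [if_neg h, if_neg h, mul_zero]
  rw [Finset.sum_congr rfl inner, ← Finset.sum_filter]

lemma T_ones (S : Finset α) (n : α → ℕ) (h : ∀ j ∈ S, n j = 1) :
    T n S = (S.card - 1).factorial := by
  classical
  set P₀ : Finset (Finset α) := S.image (fun x => ({x} : Finset α)) with hP₀
  have hmem : P₀ ∈ partitionsOf S := by
    rw [mem_partitionsOf]
    refine ⟨?_, ?_, ?_⟩
    · intro B hB
      obtain ⟨x, hx, rfl⟩ := Finset.mem_image.mp hB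
      exact ⟨x, Finset.mem_singleton_self x⟩
    · intro B hB B' hB' hne
      obtain ⟨x, hx, rfl⟩ := Finset.mem_image.mp hB
      obtain ⟨y, hy, rfl⟩ := Finset.mem_image.mp hB'
      rw [Finset.disjoint_singleton]
      rintro rfl; exact hne rfl
    · ext z
      rw [Finset.mem_sup]
      constructor
      · rintro ⟨B, hB, hz⟩
        obtain ⟨x, hx, rfl⟩ := Finset.mem_image.mp hB
        rw [id, Finset.mem_singleton] at hz
        exact hz ▸ hx
      · intro hz
        exact ⟨{z}, Finset.mem_image_of_mem _ hz, Finset.mem_singleton_self z⟩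
  have hcard₀ : P₀.card = S.card :=
    Finset.card_image_of_injective _ (fun x y h => Finset.singleton_injective h)
  rw [T, Finset.sum_eq_single P₀]
  · rw [hcard₀]
    have : ∏ B ∈ P₀, W n B = 1 := by
      apply Finset.prod_eq_one
      intro B hB
      obtain ⟨x, hx, rfl⟩ := Finset.mem_image.mp hB
      simp [W]
    rw [this, mul_one]
  · intro P hP hne
    rw [mem_partitionsOf] at hP
    have : ∃ B ∈ P, 2 ≤ B.card := by
      by_contra hno
      push_neg at hno
      apply hne
      have hsingle : ∀ B ∈ P, ∃ x, B = {x} := by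
        intro B hB
        have hc1 : 1 ≤ B.card := Finset.card_pos.mpr (hP.1 B hB)
        have hc2 := hno B hB
        exact Finset.card_eq_one.mp (by omega)
      ext C
      constructor
      · intro hC
        obtain ⟨x, rfl⟩ := hsingle C hC
        have hxS : x ∈ S := by
          rw [← hP.2.2]
          exact Finset.mem_sup.mpr ⟨{x}, hC, Finset.mem_singleton_self x⟩
        exact Finset.mem_image_of_mem _ hxS
      · intro hC
        obtain ⟨x, hx, rfl⟩ := Finset.mem_image.mp hC
        have : x ∈ P.sup id := hP.2.2.symm ▸ hx
        obtain ⟨B, hB, hxB⟩ := Finset.mem_sup.mp this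
        obtain ⟨y, rfl⟩ := hsingle B hB
        rw [id, Finset.mem_singleton] at hxB
        subst hxB
        exact hB
    obtain ⟨B, hB, h2⟩ := this
    have hzero : W n B = 0 := by
      have hBS : B ⊆ S := block_subset hP hB
      have hsum : ∑ k ∈ B, n k = B.card := by
        rw [Finset.sum_congr rfl (fun k hk => h k (hBS hk))]
        simp
      rw [W, hsum, Nat.sub_self]
      obtain ⟨t, ht⟩ : ∃ t, B.card - 1 = t + 1 := ⟨B.card - 2, by omega⟩
      rw [ht, Nat.zero_ascFactorial]
    rw [Finset.prod_eq_zero hB hzero, mul_zero]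
  · intro h; exact absurd hmem h

lemma T_eq : ∀ (s : ℕ) (S : Finset α) (n : α → ℕ), (∀ j ∈ S, 1 ≤ n j) →
    ∑ j ∈ S, n j = s → T n S = (s - S.card + 1).ascFactorial (S.card - 1) := by
  intro s
  induction s using Nat.strong_induction_on with
  | _ s IH =>
    intro S n h1 hsum
    by_cases hex : ∃ a ∈ S, 2 ≤ n a
    · obtain ⟨a, haS, hna⟩ := hex
      have hcS : 1 ≤ S.card := Finset.card_pos.mpr ⟨a, haS⟩
      have hles : S.card + 1 ≤ s := by
        have he : n a + ∑ j ∈ S.erase a, n j = ∑ j ∈ S, n j := Finset.add_sum_erase S n haS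
        have h2 : (S.erase a).card ≤ ∑ j ∈ S.erase a, n j := by
          calc (S.erase a).card = ∑ k ∈ S.erase a, 1 := by
                rw [Finset.sum_const, smul_eq_mul, mul_one]
          _ ≤ _ := Finset.sum_le_sum (fun k hk => h1 k (Finset.mem_of_mem_erase hk))
        have h3 : (S.erase a).card = S.card - 1 := Finset.card_erase_of_mem haS
        omega
      have hslt : s - 1 < s := by omega
      rw [T_rec haS h1 hna]
      have e1 : T (Function.update n a (n a - 1)) S
          = ((s-1) - S.card + 1).ascFactorial (S.card - 1) := by
        apply IH (s-1) hslt
        · intro k hk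
          by_cases h : k = a
          · subst h; rw [Function.update_self]; omega
          · rw [Function.update_of_ne h]; exact h1 k hk
        · rw [Finset.sum_update_of_mem haS, ← Finset.erase_eq]
          have := Finset.add_sum_erase S n haS
          omega
      rw [e1]
      have e2 : ∀ j ∈ S.erase a, T (Function.update n j (n j + n a - 1)) (S.erase a)
          = ((s-1) - (S.erase a).card + 1).ascFactorial ((S.erase a).card - 1) := by
        intro j hj
        apply IH (s-1) hslt
        · intro k hk
          by_cases h : k = j
          · subst h; rw [Function.update_self]
            have := h1 k (Finset.mem_of_mem_erase hk); omega
          · rw [Function.update_of_ne h]; exact h1 k (Finset.mem_of_mem_erase hk)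
        · rw [Finset.sum_update_of_mem hj, ← Finset.erase_eq]
          have h4 : n j + ∑ k ∈ (S.erase a).erase j, n k = ∑ k ∈ S.erase a, n k :=
            Finset.add_sum_erase _ n hj
          have h5 : n a + ∑ k ∈ S.erase a, n k = ∑ k ∈ S, n k := Finset.add_sum_erase _ n haS
          omega
      rw [Finset.sum_congr rfl e2, Finset.sum_const, Finset.card_erase_of_mem haS, smul_eq_mul]
      have ea : (s-1) - S.card + 1 = s - S.card := by omega
      have eb : (s-1) - (S.card - 1) + 1 = (s - S.card) + 1 := by omega
      rw [ea, eb]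
      exact (asc_step _ _).symm
    · push_neg at hex
      have hall : ∀ j ∈ S, n j = 1 := by
        intro j hj
        have := hex j hj
        have := h1 j hj
        omega
      have hsc : s = S.card := by
        rw [← hsum, Finset.sum_congr rfl hall, Finset.sum_const, smul_eq_mul, mul_one]
      rw [T_ones S n hall, hsc, Nat.sub_self, zero_add, Nat.one_ascFactorial]

end CoefCEval

/- Evaluation of the coefficient `C_{n₁…n_p 0…0} = (s-1)!` (Proposition 4.2 of
the paper). For `p ≥ 1` and `n₁, …, n_p ≥ 1` with `s = n₁ + ⋯ + n_p ≥ p`: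
`∑_{r=1}^{p} (r-1)! ∑_{partitions J₁⊎⋯⊎J_r of {1,…,p}} (s-p)!
  ∏_i (N_i-2)!(N_i-|J_i|)/(N_i-|J_i|)! = (s-1)!`,
where `N_i = ∑_{k∈J_i} n_k` and the block factor is read as the rising
factorial `(N_i - |J_i|)^rising(|J_i|-1)` (so all terms are well-defined
nonnegative integers). Ordered partitions by minima = unordered partitions. -/
theorem coefficient_C_eval (p : ℕ) (hp : 1 ≤ p) (n : Fin p → ℕ)
    (hn : ∀ j, 1 ≤ n j) (s : ℕ) (hs : s = ∑ j, n j) (hsp : p ≤ s) :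
    ∑ r ∈ Finset.Icc 1 p, (r - 1).factorial *
      ∑ P ∈ (partitionsOf (Finset.univ : Finset (Fin p))).filter
          (fun P => P.card = r),
        (s - p).factorial *
          ∏ B ∈ P, ((∑ k ∈ B, n k) - B.card).ascFactorial (B.card - 1) =
      (s - 1).factorial := by
  classical
  have hcard : (Finset.univ : Finset (Fin p)).card = p := by simp
  have hmaps : ∀ P ∈ partitionsOf (Finset.univ : Finset (Fin p)),
      P.card ∈ Finset.Icc 1 p := by
    intro P hP
    rw [CoefCEval.mem_partitionsOf] at hP
    rw [Finset.mem_Icc]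
    constructor
    · have : (⟨0, hp⟩ : Fin p) ∈ (Finset.univ : Finset (Fin p)) := Finset.mem_univ _
      obtain ⟨B, hB, _⟩ := CoefCEval.exists_block hP this
      exact Finset.card_pos.mpr ⟨B, hB⟩
    · have hb : (P.biUnion id).card = ∑ B ∈ P, B.card :=
        Finset.card_biUnion (fun x hx y hy hxy => hP.2.1 x hx y hy hxy)
      have hsup : P.biUnion id = P.sup id := (Finset.sup_eq_biUnion P id).symm
      have hle : P.card ≤ ∑ B ∈ P, B.card := by
        calc P.card = ∑ B ∈ P, 1 := by rw [Finset.sum_const, smul_eq_mul, mul_one]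
        _ ≤ _ := Finset.sum_le_sum (fun B hB => Finset.card_pos.mpr (hP.1 B hB))
      rw [← hb, hsup, hP.2.2, hcard] at hle
      exact hle
  calc ∑ r ∈ Finset.Icc 1 p, (r - 1).factorial *
      ∑ P ∈ (partitionsOf (Finset.univ : Finset (Fin p))).filter (fun P => P.card = r),
        (s - p).factorial * ∏ B ∈ P, ((∑ k ∈ B, n k) - B.card).ascFactorial (B.card - 1)
      = ∑ r ∈ Finset.Icc 1 p,
          ∑ P ∈ (partitionsOf (Finset.univ : Finset (Fin p))).filter (fun P => P.card = r),
            (s - p).factorial * ((P.card - 1).factorial *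
              ∏ B ∈ P, CoefCEval.W n B) := by
        apply Finset.sum_congr rfl
        intro r hr
        rw [Finset.mul_sum]
        apply Finset.sum_congr rfl
        intro P hP
        rw [(Finset.mem_filter.mp hP).2]
        simp only [CoefCEval.W]
        ring
    _ = ∑ P ∈ partitionsOf (Finset.univ : Finset (Fin p)),
          (s - p).factorial * ((P.card - 1).factorial * ∏ B ∈ P, CoefCEval.W n B) :=
        Finset.sum_fiberwise_of_maps_to hmaps _
    _ = (s - p).factorial * CoefCEval.T n Finset.univ := by
        rw [CoefCEval.T, Finset.mul_sum]
    _ = (s - p).factorial * (s - p + 1).ascFactorial (p - 1) := by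
        rw [CoefCEval.T_eq s Finset.univ n (fun j _ => hn j) hs.symm, hcard]
    _ = (s - 1).factorial := by
        rw [Nat.factorial_mul_ascFactorial]
        congr 1
        omega
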